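/- If x, y, z, t ∈ ℂ satisfy |x| = |y| = |z| = |t| = 1 and x + y + z + t = 0, then x ∈ {−y, −z, −t}. -/

import Mathlib

open Complex

/-- If `|x| = |y| = |z| = |t| = 1` and `x + y + z + t = 0`,
then `x ∈ {−y, −z, −t}`. -/
theorem four_unit_vectors_sum_zero (x y z t : ℂ)
    (hx : ‖x‖ = 1) (hy : ‖y‖ = 1)
    (hz : ‖z‖ = 1) (ht : ‖t‖ = 1)
    (hsum : x + y + z + t = 0) :
    x = -y ∨ x = -z ∨ x = -t := by
  have conj1 : ∀ w : ℂ, ‖w‖ = 1 → w * (starRingEnd ℂ) w = 1 := by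
    intro w hw
    rw [Complex.mul_conj]
    norm_cast
    rw [← Complex.sq_norm, hw]; norm_num
  have hx1 := conj1 x hx
  have hy1 := conj1 y hy
  have hz1 := conj1 z hz
  have ht1 := conj1 t ht
  have hc : (starRingEnd ℂ) x + (starRingEnd ℂ) y + (starRingEnd ℂ) z + (starRingEnd ℂ) t = 0 := by
    have := congrArg (starRingEnd ℂ) hsum
    simpa using this
  have e3 : y*z*t + x*z*t + x*y*t + x*y*z = 0 := by
    linear_combination (x*y*z*t)*hc - (y*z*t)*hx1 - (x*z*t)*hy1 - (x*y*t)*hz1 - (x*y*z)*ht1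
  have key : (x + y) * (x + z) * (x + t) = 0 := by
    linear_combination e3 + x^2 * hsum
  rcases mul_eq_zero.mp key with h | h
  · rcases mul_eq_zero.mp h with h | h
    · left; exact add_eq_zero_iff_eq_neg.mp h
    · right; left; exact add_eq_zero_iff_eq_neg.mp h
  · right; right; exact add_eq_zero_iff_eq_neg.mp h
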